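/- For every integer n ≥ 0 and every x ∈ (−1,1), the Hadamard finite part (1/π)·lim_{ρ→0⁺} [ ∫_{{y ∈ (−1,1) : |y−x| > ρ}} U_n(y)·√(1−y²)/(y−x)² dy − 2·U_n(x)·√(1−x²)/ρ ] equals −(n+1)·U_n(x). -/

import Mathlib

open MeasureTheory Filter Set Polynomial

section HadamardAux
open Real Topology

namespace HadamardU

lemma arccos_lt_pi' {x : ℝ} (hx1 : -1 < x) : arccos x < π := by
  rcases lt_or_eq_of_le (Real.arccos_le_pi x) with h | h
  · exact h
  · exact absurd (Real.arccos_eq_pi.mp h) (not_le.mpr hx1)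

lemma hasDerivAt_F1 {x : ℝ} (hx1 : -1 < x) (hx2 : x < 1) {θ : ℝ}
    (h0 : 0 ≤ θ) (hθ : θ < arccos x) :
    HasDerivAt (fun t => (1 / Real.sqrt (1 - x ^ 2)) *
      (Real.log (Real.sin ((t + arccos x) / 2)) - Real.log (Real.sin ((arccos x - t) / 2))))
      (1 / (Real.cos θ - x)) θ := by
  have hφ0 : 0 < arccos x := Real.arccos_pos.mpr hx2
  have hφπ : arccos x < π := arccos_lt_pi' hx1
  set φ := arccos x with hφ
  have hu0 : 0 < (θ + φ) / 2 := by positivity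
  have huπ : (θ + φ) / 2 < π := by
    have : θ < π := lt_of_lt_of_le hθ (Real.arccos_le_pi x)
    linarith
  have hv0 : 0 < (φ - θ) / 2 := by linarith
  have hvπ : (φ - θ) / 2 < π := by linarith
  have hsu : 0 < Real.sin ((θ + φ) / 2) := Real.sin_pos_of_pos_of_lt_pi hu0 huπ
  have hsv : 0 < Real.sin ((φ - θ) / 2) := Real.sin_pos_of_pos_of_lt_pi hv0 hvπ
  have d1 : HasDerivAt (fun t : ℝ => (t + φ) / 2) (1 / 2) θ := by
    simpa using ((hasDerivAt_id θ).add_const φ).div_const 2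
  have d2 : HasDerivAt (fun t : ℝ => (φ - t) / 2) (-1 / 2) θ := by
    simpa using ((hasDerivAt_id θ).const_sub φ).div_const 2
  have D1 : HasDerivAt (fun t => Real.log (Real.sin ((t + φ) / 2)))
      (Real.cos ((θ + φ) / 2) * (1 / 2) / Real.sin ((θ + φ) / 2)) θ :=
    (d1.sin).log hsu.ne'
  have D2 : HasDerivAt (fun t => Real.log (Real.sin ((φ - t) / 2)))
      (Real.cos ((φ - θ) / 2) * (-1 / 2) / Real.sin ((φ - θ) / 2)) θ :=
    (d2.sin).log hsv.ne'
  have key := ((D1.sub D2).const_mul (1 / Real.sqrt (1 - x ^ 2)))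
  convert key using 1
  · rfl
  · rfl
  · rfl
  have hsφ : Real.sqrt (1 - x ^ 2) = Real.sin φ := (Real.sin_arccos x).symm
  have hsinφ : Real.sin φ
      = Real.sin ((θ + φ) / 2) * Real.cos ((φ - θ) / 2)
        + Real.cos ((θ + φ) / 2) * Real.sin ((φ - θ) / 2) := by
    have h := Real.sin_add ((θ + φ) / 2) ((φ - θ) / 2)
    have harg : (θ + φ) / 2 + (φ - θ) / 2 = φ := by ring
    rw [harg] at h
    exact h
  have hcosθ : Real.cos θ - x = 2 * Real.sin ((θ + φ) / 2) * Real.sin ((φ - θ) / 2) := by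
    have hc : Real.cos φ = x := Real.cos_arccos hx1.le hx2.le
    rw [← hc, Real.cos_sub_cos]
    have h2 : (θ - φ) / 2 = -((φ - θ) / 2) := by ring
    rw [h2, Real.sin_neg]
    ring
  have hsφ0 : 0 < Real.sin φ := Real.sin_pos_of_pos_of_lt_pi hφ0 hφπ
  rw [hsφ, hcosθ, hsinφ]
  have hS : Real.sin ((θ + φ) / 2) * Real.cos ((φ - θ) / 2)
      + Real.cos ((θ + φ) / 2) * Real.sin ((φ - θ) / 2) ≠ 0 := by
    rw [← hsinφ]; exact hsφ0.ne'
  rw [show Real.cos ((θ + φ) / 2) * (1 / 2) / Real.sin ((θ + φ) / 2) - Real.cos ((φ - θ) / 2) * (-1 / 2) / Real.sin ((φ - θ) / 2)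
      = (Real.sin ((θ + φ) / 2) * Real.cos ((φ - θ) / 2) + Real.cos ((θ + φ) / 2) * Real.sin ((φ - θ) / 2)) / (2 * Real.sin ((θ + φ) / 2) * Real.sin ((φ - θ) / 2)) by field_simp; ring,
    one_div_mul_eq_div, div_div_cancel_left' hS, one_div]

lemma hasDerivAt_F2 {x : ℝ} (hx1 : -1 < x) (hx2 : x < 1) {θ : ℝ}
    (h0 : θ ≤ π) (hθ : arccos x < θ) :
    HasDerivAt (fun t => (1 / Real.sqrt (1 - x ^ 2)) *
      (Real.log (Real.sin ((t + arccos x) / 2)) - Real.log (Real.sin ((t - arccos x) / 2))))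
      (1 / (Real.cos θ - x)) θ := by
  have hφ0 : 0 < arccos x := Real.arccos_pos.mpr hx2
  have hφπ : arccos x < π := arccos_lt_pi' hx1
  set φ := arccos x with hφ
  have hu0 : 0 < (θ + φ) / 2 := by linarith
  have huπ : (θ + φ) / 2 < π := by linarith
  have hv0 : 0 < (θ - φ) / 2 := by linarith
  have hvπ : (θ - φ) / 2 < π := by linarith
  have hsu : 0 < Real.sin ((θ + φ) / 2) := Real.sin_pos_of_pos_of_lt_pi hu0 huπ
  have hsv : 0 < Real.sin ((θ - φ) / 2) := Real.sin_pos_of_pos_of_lt_pi hv0 hvπ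
  have d1 : HasDerivAt (fun t : ℝ => (t + φ) / 2) (1 / 2) θ := by
    simpa using ((hasDerivAt_id θ).add_const φ).div_const 2
  have d2 : HasDerivAt (fun t : ℝ => (t - φ) / 2) (1 / 2) θ := by
    simpa using ((hasDerivAt_id θ).sub_const φ).div_const 2
  have D1 : HasDerivAt (fun t => Real.log (Real.sin ((t + φ) / 2)))
      (Real.cos ((θ + φ) / 2) * (1 / 2) / Real.sin ((θ + φ) / 2)) θ :=
    (d1.sin).log hsu.ne'
  have D2 : HasDerivAt (fun t => Real.log (Real.sin ((t - φ) / 2)))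
      (Real.cos ((θ - φ) / 2) * (1 / 2) / Real.sin ((θ - φ) / 2)) θ :=
    (d2.sin).log hsv.ne'
  have key := ((D1.sub D2).const_mul (1 / Real.sqrt (1 - x ^ 2)))
  convert key using 1
  · rfl
  · rfl
  · rfl
  have hsφ : Real.sqrt (1 - x ^ 2) = Real.sin φ := (Real.sin_arccos x).symm
  have hsinφ : Real.sin φ
      = Real.sin ((θ + φ) / 2) * Real.cos ((θ - φ) / 2)
        - Real.cos ((θ + φ) / 2) * Real.sin ((θ - φ) / 2) := by
    have h := Real.sin_sub ((θ + φ) / 2) ((θ - φ) / 2)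
    have harg : (θ + φ) / 2 - (θ - φ) / 2 = φ := by ring
    rw [harg] at h
    exact h
  have hcosθ : Real.cos θ - x = -(2 * Real.sin ((θ + φ) / 2) * Real.sin ((θ - φ) / 2)) := by
    have hc : Real.cos φ = x := Real.cos_arccos hx1.le hx2.le
    rw [← hc, Real.cos_sub_cos]
    ring
  have hsφ0 : 0 < Real.sin φ := Real.sin_pos_of_pos_of_lt_pi hφ0 hφπ
  rw [hsφ, hcosθ, hsinφ]
  have hS : Real.sin ((θ + φ) / 2) * Real.cos ((θ - φ) / 2)
      - Real.cos ((θ + φ) / 2) * Real.sin ((θ - φ) / 2) ≠ 0 := by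
    rw [← hsinφ]; exact hsφ0.ne'
  rw [show Real.cos ((θ + φ) / 2) * (1 / 2) / Real.sin ((θ + φ) / 2) - Real.cos ((θ - φ) / 2) * (1 / 2) / Real.sin ((θ - φ) / 2)
      = -(Real.sin ((θ + φ) / 2) * Real.cos ((θ - φ) / 2) - Real.cos ((θ + φ) / 2) * Real.sin ((θ - φ) / 2)) / (2 * Real.sin ((θ + φ) / 2) * Real.sin ((θ - φ) / 2)) by field_simp; ring,
    neg_div, mul_neg, one_div_mul_eq_div, div_div_cancel_left' hS, one_div, inv_neg]


lemma pos_left {x ρ : ℝ} (hx1 : -1 < x) (hρ : 0 < ρ) (hA : x + ρ < 1) {θ : ℝ}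
    (hθ : θ ∈ uIcc (0:ℝ) (arccos (x + ρ))) : ρ ≤ Real.cos θ - x := by
  rw [uIcc_of_le (Real.arccos_nonneg _)] at hθ
  have hc : Real.cos (arccos (x + ρ)) = x + ρ :=
    Real.cos_arccos (by linarith) hA.le
  have := Real.cos_le_cos_of_nonneg_of_le_pi hθ.1 (Real.arccos_le_pi _) hθ.2
  rw [hc] at this
  linarith

lemma neg_right {x ρ : ℝ} (hx2 : x < 1) (hρ : 0 < ρ) (hB : -1 < x - ρ) {θ : ℝ}
    (hθ : θ ∈ uIcc (arccos (x - ρ)) π) : Real.cos θ - x ≤ -ρ := by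
  rw [uIcc_of_le (Real.arccos_le_pi _)] at hθ
  have hc : Real.cos (arccos (x - ρ)) = x - ρ :=
    Real.cos_arccos hB.le (by linarith)
  have := Real.cos_le_cos_of_nonneg_of_le_pi (Real.arccos_nonneg _) hθ.2 hθ.1
  rw [hc] at this
  linarith

lemma t1_lt {x ρ : ℝ} (hx1 : -1 < x) (hρ : 0 < ρ) (hA : x + ρ < 1) :
    arccos (x + ρ) < arccos x :=
  Real.strictAntiOn_arccos ⟨hx1.le, by linarith⟩ ⟨by linarith, hA.le⟩ (by linarith)

lemma t2_gt {x ρ : ℝ} (hx2 : x < 1) (hρ : 0 < ρ) (hB : -1 < x - ρ) :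
    arccos x < arccos (x - ρ) :=
  Real.strictAntiOn_arccos ⟨hB.le, by linarith⟩ ⟨by linarith, hx2.le⟩ (by linarith)

lemma eval_left0 {x ρ : ℝ} (hx1 : -1 < x) (hx2 : x < 1) (hρ : 0 < ρ) (hA : x + ρ < 1) :
    ∫ θ in (0:ℝ)..arccos (x + ρ), 1 / (Real.cos θ - x)
      = (1 / Real.sqrt (1 - x ^ 2)) *
        (Real.log (Real.sin ((arccos (x + ρ) + arccos x) / 2))
          - Real.log (Real.sin ((arccos x - arccos (x + ρ)) / 2))) := by
  have hd : ∀ θ ∈ uIcc (0:ℝ) (arccos (x + ρ)),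
      HasDerivAt (fun t => (1 / Real.sqrt (1 - x ^ 2)) *
        (Real.log (Real.sin ((t + arccos x) / 2)) - Real.log (Real.sin ((arccos x - t) / 2))))
        (1 / (Real.cos θ - x)) θ := by
    intro θ hθ
    have h := hθ
    rw [uIcc_of_le (Real.arccos_nonneg _)] at h
    exact hasDerivAt_F1 hx1 hx2 h.1 (lt_of_le_of_lt h.2 (t1_lt hx1 hρ hA))
  have hint : IntervalIntegrable (fun θ => 1 / (Real.cos θ - x)) volume 0 (arccos (x + ρ)) := by
    apply ContinuousOn.intervalIntegrable
    apply ContinuousOn.div continuousOn_const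
      (Real.continuous_cos.continuousOn.sub continuousOn_const)
    intro θ hθ
    have := pos_left hx1 hρ hA hθ
    intro h; rw [show Real.cos θ - x = 0 from h] at this; linarith
  rw [intervalIntegral.integral_eq_sub_of_hasDerivAt hd hint]
  have h0 : (0 + arccos x) / 2 = arccos x / 2 := by ring
  have h0' : (arccos x - 0) / 2 = arccos x / 2 := by ring
  rw [h0, h0']
  ring

lemma eval_right0 {x ρ : ℝ} (hx1 : -1 < x) (hx2 : x < 1) (hρ : 0 < ρ) (hB : -1 < x - ρ) :
    ∫ θ in arccos (x - ρ)..π, 1 / (Real.cos θ - x)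
      = -((1 / Real.sqrt (1 - x ^ 2)) *
        (Real.log (Real.sin ((arccos (x - ρ) + arccos x) / 2))
          - Real.log (Real.sin ((arccos (x - ρ) - arccos x) / 2)))) := by
  have hd : ∀ θ ∈ uIcc (arccos (x - ρ)) π,
      HasDerivAt (fun t => (1 / Real.sqrt (1 - x ^ 2)) *
        (Real.log (Real.sin ((t + arccos x) / 2)) - Real.log (Real.sin ((t - arccos x) / 2))))
        (1 / (Real.cos θ - x)) θ := by
    intro θ hθ
    have h := hθ
    rw [uIcc_of_le (Real.arccos_le_pi _)] at h
    exact hasDerivAt_F2 hx1 hx2 h.2 (lt_of_lt_of_le (t2_gt hx2 hρ hB) h.1)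
  have hint : IntervalIntegrable (fun θ => 1 / (Real.cos θ - x)) volume (arccos (x - ρ)) π := by
    apply ContinuousOn.intervalIntegrable
    apply ContinuousOn.div continuousOn_const
      (Real.continuous_cos.continuousOn.sub continuousOn_const)
    intro θ hθ
    have := neg_right hx2 hρ hB hθ
    intro h; rw [show Real.cos θ - x = 0 from h] at this; linarith
  rw [intervalIntegral.integral_eq_sub_of_hasDerivAt hd hint]
  have hpi : Real.sin ((π + arccos x) / 2) = Real.sin ((π - arccos x) / 2) := by
    rw [show (π + arccos x) / 2 = π - (π - arccos x) / 2 by ring, Real.sin_pi_sub]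
  rw [hpi]
  ring


lemma gl0_closed {x ρ : ℝ} (hx1 : -1 < x) (hx2 : x < 1) (hρ : 0 < ρ)
    (hA : x + ρ < 1) (hB : -1 < x - ρ) :
    (∫ θ in (0:ℝ)..arccos (x + ρ), 1 / (Real.cos θ - x))
      + (∫ θ in arccos (x - ρ)..π, 1 / (Real.cos θ - x))
      = (2 / Real.sqrt (1 - x ^ 2)) *
        (Real.log (Real.sin ((arccos (x + ρ) + arccos x) / 2))
          - Real.log (Real.sin ((arccos (x - ρ) + arccos x) / 2))) := by
  rw [eval_left0 hx1 hx2 hρ hA, eval_right0 hx1 hx2 hρ hB]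
  have hφ0 : 0 < arccos x := Real.arccos_pos.mpr hx2
  have hφπ : arccos x < π := arccos_lt_pi' hx1
  have ht10 : 0 ≤ arccos (x + ρ) := Real.arccos_nonneg _
  have ht1φ : arccos (x + ρ) < arccos x := t1_lt hx1 hρ hA
  have ht2φ : arccos x < arccos (x - ρ) := t2_gt hx2 hρ hB
  have ht2π : arccos (x - ρ) ≤ π := Real.arccos_le_pi _
  set φ := arccos x
  set t1 := arccos (x + ρ)
  set t2 := arccos (x - ρ)
  have hsu1 : 0 < Real.sin ((t1 + φ) / 2) :=
    Real.sin_pos_of_pos_of_lt_pi (by linarith) (by linarith)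
  have hsv1 : 0 < Real.sin ((φ - t1) / 2) :=
    Real.sin_pos_of_pos_of_lt_pi (by linarith) (by linarith)
  have hsu2 : 0 < Real.sin ((t2 + φ) / 2) :=
    Real.sin_pos_of_pos_of_lt_pi (by linarith) (by linarith)
  have hsw2 : 0 < Real.sin ((t2 - φ) / 2) :=
    Real.sin_pos_of_pos_of_lt_pi (by linarith) (by linarith)
  have hct1 : Real.cos t1 = x + ρ := Real.cos_arccos (by linarith) hA.le
  have hct2 : Real.cos t2 = x - ρ := Real.cos_arccos hB.le (by linarith)
  have hcφ : Real.cos φ = x := Real.cos_arccos hx1.le hx2.le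
  have e1 : ρ = 2 * Real.sin ((t1 + φ) / 2) * Real.sin ((φ - t1) / 2) := by
    have h := Real.cos_sub_cos t1 φ
    rw [hct1, hcφ] at h
    have h2 : (t1 - φ) / 2 = -((φ - t1) / 2) := by ring
    rw [h2, Real.sin_neg] at h
    linarith [h]
  have e2 : ρ = 2 * Real.sin ((t2 + φ) / 2) * Real.sin ((t2 - φ) / 2) := by
    have h := Real.cos_sub_cos t2 φ
    rw [hct2, hcφ] at h
    linarith [h]
  have l1 : Real.log (Real.sin ((φ - t1) / 2))
      = Real.log ρ - Real.log (2 * Real.sin ((t1 + φ) / 2)) := by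
    rw [← Real.log_div hρ.ne' (by positivity)]
    congr 1
    field_simp [hsu1.ne']
    linarith [e1]
  have l2 : Real.log (Real.sin ((t2 - φ) / 2))
      = Real.log ρ - Real.log (2 * Real.sin ((t2 + φ) / 2)) := by
    rw [← Real.log_div hρ.ne' (by positivity)]
    congr 1
    field_simp [hsu2.ne']
    linarith [e2]
  rw [l1, l2, Real.log_mul (by norm_num) hsu1.ne', Real.log_mul (by norm_num) hsu2.ne']
  ring

lemma tendsto_arccos_add {x : ℝ} :
    Tendsto (fun ρ : ℝ => arccos (x + ρ)) (𝓝[>] 0) (𝓝 (arccos x)) := by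
  have h : ContinuousAt (fun ρ : ℝ => arccos (x + ρ)) 0 :=
    (Real.continuous_arccos.comp (continuous_const.add continuous_id)).continuousAt
  have := h.tendsto.mono_left (nhdsWithin_le_nhds (s := Set.Ioi 0))
  simpa using this

lemma tendsto_arccos_sub {x : ℝ} :
    Tendsto (fun ρ : ℝ => arccos (x - ρ)) (𝓝[>] 0) (𝓝 (arccos x)) := by
  have h : ContinuousAt (fun ρ : ℝ => arccos (x - ρ)) 0 :=
    (Real.continuous_arccos.comp (continuous_const.sub continuous_id)).continuousAt
  have := h.tendsto.mono_left (nhdsWithin_le_nhds (s := Set.Ioi 0))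
  simpa using this

lemma gl0 {x : ℝ} (hx1 : -1 < x) (hx2 : x < 1) :
    Tendsto (fun ρ : ℝ => (∫ θ in (0:ℝ)..arccos (x + ρ), 1 / (Real.cos θ - x))
      + (∫ θ in arccos (x - ρ)..π, 1 / (Real.cos θ - x))) (𝓝[>] 0) (𝓝 0) := by
  have hsφ0 : 0 < Real.sin (arccos x) := by
    rw [Real.sin_arccos]
    have : 0 < 1 - x ^ 2 := by nlinarith
    positivity
  have h1 : Tendsto (fun ρ : ℝ => Real.sin ((arccos (x + ρ) + arccos x) / 2)) (𝓝[>] 0)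
      (𝓝 (Real.sin (arccos x))) := by
    have := ((tendsto_arccos_add (x := x)).add_const (arccos x)).div_const 2
    have h2 := (Real.continuous_sin.tendsto _).comp (by simpa [add_self_div_two] using this)
    exact h2
  have h1' : Tendsto (fun ρ : ℝ => Real.sin ((arccos (x - ρ) + arccos x) / 2)) (𝓝[>] 0)
      (𝓝 (Real.sin (arccos x))) := by
    have := ((tendsto_arccos_sub (x := x)).add_const (arccos x)).div_const 2
    have h2 := (Real.continuous_sin.tendsto _).comp (by simpa [add_self_div_two] using this)
    exact h2
  have hl1 := ((Real.continuousAt_log hsφ0.ne').tendsto).comp h1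
  have hl2 := ((Real.continuousAt_log hsφ0.ne').tendsto).comp h1'
  have hmain := ((hl1.sub hl2).const_mul (2 / Real.sqrt (1 - x ^ 2)))
  rw [sub_self, mul_zero] at hmain
  apply Tendsto.congr' _ hmain
  have hδ : (0:ℝ) < min (1 - x) (1 + x) := lt_min (by linarith) (by linarith)
  filter_upwards [Ioo_mem_nhdsGT_of_mem (Set.left_mem_Ico.mpr hδ)] with ρ hρ
  exact (gl0_closed hx1 hx2 hρ.1 (by have := hρ.2; have := min_le_left (1-x) (1+x); linarith)
    (by have := hρ.2; have := min_le_right (1-x) (1+x); linarith)).symm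


-- new material
noncomputable def gInt (x : ℝ) (m : ℕ) (ρ : ℝ) : ℝ :=
  (∫ θ in (0:ℝ)..arccos (x + ρ), Real.cos (m * θ) / (Real.cos θ - x)) +
  ∫ θ in arccos (x - ρ)..π, Real.cos (m * θ) / (Real.cos θ - x)

noncomputable def gVal (x : ℝ) : ℕ → ℝ
  | 0 => 0
  | (m+1) => π * ((Polynomial.Chebyshev.U ℝ m).eval x)

lemma integral_cos_mul' (k : ℝ) (hk : k ≠ 0) (a b : ℝ) :
    ∫ θ in a..b, Real.cos (k * θ) = (Real.sin (k * b) - Real.sin (k * a)) / k := by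
  have hd : ∀ θ ∈ uIcc a b, HasDerivAt (fun t => Real.sin (k * t) / k)
      (Real.cos (k * θ)) θ := by
    intro θ _
    have h1 : HasDerivAt (fun t : ℝ => k * t) k θ := by
      simpa using (hasDerivAt_id θ).const_mul k
    have h2 := (h1.sin).div_const k
    convert h2 using 1
    · rfl
    · rfl
    field_simp
  rw [intervalIntegral.integral_eq_sub_of_hasDerivAt hd
    ((Real.continuous_cos.comp (continuous_const.mul continuous_id)).intervalIntegrable a b)]
  ring

lemma rec_interval {x a b : ℝ} (m : ℕ) (hne : ∀ θ ∈ uIcc a b, Real.cos θ - x ≠ 0) :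
    ∫ θ in a..b, Real.cos (((m:ℝ) + 2) * θ) / (Real.cos θ - x)
      = 2 * (∫ θ in a..b, Real.cos (((m:ℝ) + 1) * θ))
        + 2 * x * (∫ θ in a..b, Real.cos (((m:ℝ) + 1) * θ) / (Real.cos θ - x))
        - ∫ θ in a..b, Real.cos ((m:ℝ) * θ) / (Real.cos θ - x) := by
  have hDcont : ContinuousOn (fun θ => Real.cos θ - x) (uIcc a b) :=
    Real.continuous_cos.continuousOn.sub continuousOn_const
  have hcont : ∀ k : ℝ, ContinuousOn (fun θ => Real.cos (k * θ) / (Real.cos θ - x)) (uIcc a b) := by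
    intro k
    exact (Real.continuous_cos.comp (continuous_const.mul continuous_id)).continuousOn.div
      hDcont hne
  have i1 : IntervalIntegrable (fun θ => 2 * Real.cos (((m:ℝ) + 1) * θ)) volume a b :=
    (continuous_const.mul (Real.continuous_cos.comp (continuous_const.mul continuous_id))).intervalIntegrable a b
  have i2 : IntervalIntegrable (fun θ => 2 * x * (Real.cos (((m:ℝ) + 1) * θ) / (Real.cos θ - x)))
      volume a b := ((hcont _).intervalIntegrable).const_mul _
  have i3 : IntervalIntegrable (fun θ => Real.cos ((m:ℝ) * θ) / (Real.cos θ - x)) volume a b :=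
    (hcont _).intervalIntegrable
  have key : EqOn (fun θ => Real.cos (((m:ℝ) + 2) * θ) / (Real.cos θ - x))
      (fun θ => 2 * Real.cos (((m:ℝ) + 1) * θ)
        + (2 * x * (Real.cos (((m:ℝ) + 1) * θ) / (Real.cos θ - x))
          - Real.cos ((m:ℝ) * θ) / (Real.cos θ - x))) (uIcc a b) := by
    intro θ hθ
    have hD := hne θ hθ
    have trig : Real.cos (((m:ℝ) + 2) * θ) + Real.cos ((m:ℝ) * θ)
        = 2 * Real.cos (((m:ℝ) + 1) * θ) * Real.cos θ := by
      have h := Real.cos_add_cos (((m:ℝ) + 2) * θ) ((m:ℝ) * θ)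
      rw [show (((m:ℝ) + 2) * θ + (m:ℝ) * θ) / 2 = ((m:ℝ) + 1) * θ by ring,
        show (((m:ℝ) + 2) * θ - (m:ℝ) * θ) / 2 = θ by ring] at h
      exact h
    show Real.cos (((m:ℝ) + 2) * θ) / (Real.cos θ - x) = _
    field_simp
    linear_combination trig + 2 * Real.cos θ * congrArg Real.cos (mul_comm ((m:ℝ)+1) θ)
  rw [intervalIntegral.integral_congr key,
    intervalIntegral.integral_add i1 (i2.sub i3),
    intervalIntegral.integral_sub i2 i3,
    intervalIntegral.integral_const_mul, intervalIntegral.integral_const_mul]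
  ring

lemma cos_int_tendsto {x : ℝ} (hx1 : -1 < x) (hx2 : x < 1) (k : ℝ) (hk : k ≠ 0) :
    Tendsto (fun ρ : ℝ => (∫ θ in (0:ℝ)..arccos (x + ρ), Real.cos (k * θ))
      + ∫ θ in arccos (x - ρ)..π, Real.cos (k * θ)) (𝓝[>] 0)
      (𝓝 ((Real.sin (k * π) - 0) / k)) := by
  have h1 : Tendsto (fun ρ : ℝ => Real.sin (k * arccos (x + ρ))) (𝓝[>] 0)
      (𝓝 (Real.sin (k * arccos x))) :=
    (Real.continuous_sin.tendsto _).comp ((tendsto_arccos_add).const_mul k)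
  have h2 : Tendsto (fun ρ : ℝ => Real.sin (k * arccos (x - ρ))) (𝓝[>] 0)
      (𝓝 (Real.sin (k * arccos x))) :=
    (Real.continuous_sin.tendsto _).comp ((tendsto_arccos_sub).const_mul k)
  have hmain := (((h1.sub_const (Real.sin (k*0))).div_const k).add
    (((tendsto_const_nhds (α := ℝ) (x := Real.sin (k*π))).sub h2).div_const k))
  have : Real.sin (k * arccos x) - Real.sin (k * 0)
      + (Real.sin (k * π) - Real.sin (k * arccos x)) = Real.sin (k * π) - 0 := by
    simp
  rw [← add_div, this] at hmain
  apply Tendsto.congr _ hmain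
  intro ρ
  rw [integral_cos_mul' k hk, integral_cos_mul' k hk, ← add_div]


lemma gVal_rec {x : ℝ} (m : ℕ) : gVal x (m+2) = 2*x*gVal x (m+1) - gVal x m := by
  cases m with
  | zero =>
    simp [gVal, Polynomial.Chebyshev.U_one, Polynomial.Chebyshev.U_zero]
    ring
  | succ j =>
    show π * ((Polynomial.Chebyshev.U ℝ (j+2 : ℕ)).eval x)
      = 2*x*(π * ((Polynomial.Chebyshev.U ℝ (j+1 : ℕ)).eval x))
        - π * ((Polynomial.Chebyshev.U ℝ (j : ℕ)).eval x)
    have hc2 : ((j+2 : ℕ) : ℤ) = (j:ℤ)+2 := by push_cast; ring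
    have hc1 : ((j+1 : ℕ) : ℤ) = (j:ℤ)+1 := by push_cast; ring
    rw [hc2, hc1, Polynomial.Chebyshev.U_add_two]
    simp
    ring

lemma gla {x : ℝ} (hx1 : -1 < x) (hx2 : x < 1) (m : ℕ) :
    Tendsto (gInt x m) (𝓝[>] 0) (𝓝 (gVal x m)) := by
  have hδ : (0:ℝ) < min (1 - x) (1 + x) := lt_min (by linarith) (by linarith)
  have hmem : Set.Ioo (0:ℝ) (min (1 - x) (1 + x)) ∈ 𝓝[>] (0:ℝ) :=
    Ioo_mem_nhdsGT_of_mem (Set.left_mem_Ico.mpr hδ)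
  have hcond : ∀ ρ ∈ Set.Ioo (0:ℝ) (min (1 - x) (1 + x)),
      0 < ρ ∧ x + ρ < 1 ∧ -1 < x - ρ := by
    intro ρ hρ
    have h1 := hρ.2
    have h2 := min_le_left (1-x) (1+x)
    have h3 := min_le_right (1-x) (1+x)
    exact ⟨hρ.1, by linarith, by linarith⟩
  have key : ∀ m : ℕ, Tendsto (gInt x m) (𝓝[>] 0) (𝓝 (gVal x m))
      ∧ Tendsto (gInt x (m+1)) (𝓝[>] 0) (𝓝 (gVal x (m+1))) := by
    intro m
    induction m with
    | zero =>
      have h0 : Tendsto (gInt x 0) (𝓝[>] 0) (𝓝 (gVal x 0)) := by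
        have h := gl0 hx1 hx2
        have : gVal x 0 = 0 := rfl
        rw [this]
        apply Tendsto.congr _ h
        intro ρ
        simp [gInt]
      refine ⟨h0, ?_⟩
      -- m = 1
      have hlim : Tendsto (fun ρ : ℝ => (arccos (x+ρ) + (π - arccos (x-ρ)))
          + x * ((∫ θ in (0:ℝ)..arccos (x + ρ), 1 / (Real.cos θ - x))
            + (∫ θ in arccos (x - ρ)..π, 1 / (Real.cos θ - x)))) (𝓝[>] 0)
          (𝓝 ((arccos x + (π - arccos x)) + x * 0)) :=
        ((tendsto_arccos_add).add (tendsto_const_nhds.sub tendsto_arccos_sub)).add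
          ((gl0 hx1 hx2).const_mul x)
      have hval : (arccos x + (π - arccos x)) + x * 0 = gVal x 1 := by
        simp [gVal, Polynomial.Chebyshev.U_zero]
      rw [hval] at hlim
      apply Tendsto.congr' _ hlim
      filter_upwards [hmem] with ρ hρ
      obtain ⟨h1, h2, h3⟩ := hcond ρ hρ
      have eL : ∫ θ in (0:ℝ)..arccos (x + ρ), Real.cos ((1:ℕ) * θ) / (Real.cos θ - x)
          = (arccos (x+ρ) - 0) + x * ∫ θ in (0:ℝ)..arccos (x + ρ), 1 / (Real.cos θ - x) := by
        have hne : ∀ θ ∈ uIcc (0:ℝ) (arccos (x + ρ)), Real.cos θ - x ≠ 0 := by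
          intro θ hθ
          have := pos_left hx1 h1 h2 hθ; intro h; rw [h] at this; linarith
        have hi : IntervalIntegrable (fun θ => x * (1 / (Real.cos θ - x))) volume 0 (arccos (x+ρ)) := by
          apply ContinuousOn.intervalIntegrable
          exact continuousOn_const.mul (continuousOn_const.div
            (Real.continuous_cos.continuousOn.sub continuousOn_const) hne)
        have key : EqOn (fun θ => Real.cos ((1:ℕ) * θ) / (Real.cos θ - x))
            (fun θ => 1 + x * (1 / (Real.cos θ - x))) (uIcc (0:ℝ) (arccos (x + ρ))) := by
          intro θ hθ
          have hD := hne θ hθ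
          show Real.cos ((1:ℕ) * θ) / (Real.cos θ - x) = _
          push_cast
          rw [one_mul]
          field_simp
          ring
        rw [intervalIntegral.integral_congr key,
          intervalIntegral.integral_add (intervalIntegrable_const) hi,
          intervalIntegral.integral_const_mul]
        simp
      have eR : ∫ θ in arccos (x - ρ)..π, Real.cos ((1:ℕ) * θ) / (Real.cos θ - x)
          = (π - arccos (x-ρ)) + x * ∫ θ in arccos (x - ρ)..π, 1 / (Real.cos θ - x) := by
        have hne : ∀ θ ∈ uIcc (arccos (x - ρ)) π, Real.cos θ - x ≠ 0 := by
          intro θ hθ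
          have := neg_right hx2 h1 h3 hθ; intro h; rw [h] at this; linarith
        have hi : IntervalIntegrable (fun θ => x * (1 / (Real.cos θ - x))) volume (arccos (x-ρ)) π := by
          apply ContinuousOn.intervalIntegrable
          exact continuousOn_const.mul (continuousOn_const.div
            (Real.continuous_cos.continuousOn.sub continuousOn_const) hne)
        have key : EqOn (fun θ => Real.cos ((1:ℕ) * θ) / (Real.cos θ - x))
            (fun θ => 1 + x * (1 / (Real.cos θ - x))) (uIcc (arccos (x - ρ)) π) := by
          intro θ hθ
          have hD := hne θ hθ
          show Real.cos ((1:ℕ) * θ) / (Real.cos θ - x) = _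
          push_cast
          rw [one_mul]
          field_simp
          ring
        rw [intervalIntegral.integral_congr key,
          intervalIntegral.integral_add (intervalIntegrable_const) hi,
          intervalIntegral.integral_const_mul]
        simp
      show _ = gInt x 1 ρ
      rw [gInt, eL, eR]
      ring
    | succ j ih =>
      refine ⟨ih.2, ?_⟩
      -- case j+2
      have hkne : ((j:ℝ) + 1) ≠ 0 := by positivity
      have htrig := cos_int_tendsto hx1 hx2 ((j:ℝ)+1) hkne
      have hsin0 : Real.sin (((j:ℝ)+1) * π) = 0 := by
        have : ((j:ℝ)+1) = ((j+1 : ℕ) : ℝ) := by push_cast; ring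
        rw [this, Real.sin_nat_mul_pi]
      rw [hsin0] at htrig
      norm_num at htrig
      have hlim := ((htrig.const_mul 2).add ((ih.2.const_mul (2*x)).sub ih.1))
      rw [mul_zero, zero_add] at hlim
      have hval : 2*x*gVal x (j+1) - gVal x j = gVal x (j+2) := (gVal_rec j).symm
      rw [hval] at hlim
      apply Tendsto.congr' _ hlim
      filter_upwards [hmem] with ρ hρ
      obtain ⟨h1, h2, h3⟩ := hcond ρ hρ
      have hneL : ∀ θ ∈ uIcc (0:ℝ) (arccos (x + ρ)), Real.cos θ - x ≠ 0 := by
        intro θ hθ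
        have := pos_left hx1 h1 h2 hθ; intro h; rw [h] at this; linarith
      have hneR : ∀ θ ∈ uIcc (arccos (x - ρ)) π, Real.cos θ - x ≠ 0 := by
        intro θ hθ
        have := neg_right hx2 h1 h3 hθ; intro h; rw [h] at this; linarith
      have recL := rec_interval (x := x) (a := (0:ℝ)) (b := arccos (x+ρ)) j hneL
      have recR := rec_interval (x := x) (a := arccos (x-ρ)) (b := π) j hneR
      have hc2 : ((j+2 : ℕ) : ℝ) = (j:ℝ)+2 := by push_cast; ring
      have hc1 : ((j+1 : ℕ) : ℝ) = (j:ℝ)+1 := by push_cast; ring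
      show _ = gInt x (j+2) ρ
      simp only [gInt, hc2, hc1]
      rw [recL, recR]
      ring

  exact (key m).1


lemma mainFTC {x a b : ℝ} (K : ℝ) (hne : ∀ θ ∈ uIcc a b, Real.cos θ - x ≠ 0) :
    ∫ θ in a..b, Real.sin (K * θ) * Real.sin θ / (Real.cos θ - x) ^ 2
      = (Real.sin (K * b) / (Real.cos b - x) - Real.sin (K * a) / (Real.cos a - x))
        - K * ∫ θ in a..b, Real.cos (K * θ) / (Real.cos θ - x) := by
  have hd : ∀ θ ∈ uIcc a b, HasDerivAt (fun t => Real.sin (K * t) / (Real.cos t - x))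
      ((Real.cos (K * θ) * K * (Real.cos θ - x) - Real.sin (K * θ) * (-Real.sin θ))
        / (Real.cos θ - x) ^ 2) θ := by
    intro θ hθ
    have h1 : HasDerivAt (fun t : ℝ => Real.sin (K * t)) (Real.cos (K * θ) * K) θ := by
      have h0 : HasDerivAt (fun t : ℝ => K * t) K θ := by
        simpa using (hasDerivAt_id θ).const_mul K
      exact h0.sin
    have h2 : HasDerivAt (fun t : ℝ => Real.cos t - x) (-Real.sin θ) θ :=
      (Real.hasDerivAt_cos θ).sub_const x
    exact h1.div h2 (hne θ hθ)
  have hcontD : ContinuousOn (fun θ => Real.cos θ - x) (uIcc a b) :=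
    Real.continuous_cos.continuousOn.sub continuousOn_const
  have hcos : Continuous fun θ : ℝ => Real.cos (K * θ) :=
    Real.continuous_cos.comp (continuous_const.mul continuous_id)
  have hsin : Continuous fun θ : ℝ => Real.sin (K * θ) :=
    Real.continuous_sin.comp (continuous_const.mul continuous_id)
  have hint : IntervalIntegrable (fun θ => (Real.cos (K * θ) * K * (Real.cos θ - x)
      - Real.sin (K * θ) * (-Real.sin θ)) / (Real.cos θ - x) ^ 2) volume a b := by
    apply ContinuousOn.intervalIntegrable
    apply ContinuousOn.div
    · exact ((hcos.continuousOn.mul continuousOn_const).mul hcontD).sub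
        (hsin.continuousOn.mul (Real.continuous_sin.neg).continuousOn)
    · exact hcontD.pow 2
    · intro θ hθ; exact pow_ne_zero 2 (hne θ hθ)
  have hftc := intervalIntegral.integral_eq_sub_of_hasDerivAt hd hint
  have i2 : IntervalIntegrable (fun θ => K * (Real.cos (K * θ) / (Real.cos θ - x))) volume a b := by
    apply ContinuousOn.intervalIntegrable
    exact continuousOn_const.mul (hcos.continuousOn.div hcontD hne)
  have i3 : IntervalIntegrable (fun θ => Real.sin (K * θ) * Real.sin θ / (Real.cos θ - x) ^ 2)
      volume a b := by
    apply ContinuousOn.intervalIntegrable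
    apply ContinuousOn.div
    · exact hsin.continuousOn.mul Real.continuous_sin.continuousOn
    · exact hcontD.pow 2
    · intro θ hθ; exact pow_ne_zero 2 (hne θ hθ)
  have hsplit : EqOn (fun θ => (Real.cos (K * θ) * K * (Real.cos θ - x)
      - Real.sin (K * θ) * (-Real.sin θ)) / (Real.cos θ - x) ^ 2)
      (fun θ => Real.sin (K * θ) * Real.sin θ / (Real.cos θ - x) ^ 2
        + K * (Real.cos (K * θ) / (Real.cos θ - x))) (uIcc a b) := by
    intro θ hθ
    have hD := hne θ hθ
    show _ = _
    field_simp
    ring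
  rw [intervalIntegral.integral_congr hsplit,
    intervalIntegral.integral_add i3 i2, intervalIntegral.integral_const_mul] at hftc
  linarith [hftc]

lemma setEq {x ρ : ℝ} (hx1 : -1 < x) (hx2 : x < 1) (hρ : 0 < ρ) :
    {y : ℝ | y ∈ Set.Ioo (-1:ℝ) 1 ∧ ρ < |y - x|}
      = Set.Ioo (-1) (x - ρ) ∪ Set.Ioo (x + ρ) 1 := by
  ext y
  simp only [Set.mem_setOf_eq, Set.mem_Ioo, Set.mem_union, lt_abs, neg_sub]
  constructor
  · rintro ⟨⟨hy1, hy2⟩, h | h⟩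
    · right; exact ⟨by linarith, hy2⟩
    · left; exact ⟨hy1, by linarith⟩
  · rintro (⟨hy1, hy2⟩ | ⟨hy1, hy2⟩)
    · exact ⟨⟨hy1, by linarith⟩, Or.inr (by linarith)⟩
    · exact ⟨⟨by linarith, hy2⟩, Or.inl (by linarith)⟩

lemma contOnF {x : ℝ} (n : ℕ) {s : Set ℝ} (hs : ∀ y ∈ s, y - x ≠ 0) :
    ContinuousOn (fun y => (Polynomial.Chebyshev.U ℝ n).eval y * Real.sqrt (1 - y ^ 2)
      / (y - x) ^ 2) s := by
  apply ContinuousOn.div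
  · exact ((Polynomial.Chebyshev.U ℝ n).continuous).continuousOn.mul
      ((Real.continuous_sqrt.comp (continuous_const.sub (continuous_pow 2))).continuousOn)
  · exact (continuous_id.sub continuous_const).continuousOn.pow 2
  · intro y hy; exact pow_ne_zero 2 (hs y hy)

lemma setToTheta {x ρ : ℝ} (n : ℕ) (hx1 : -1 < x) (hx2 : x < 1) (hρ : 0 < ρ)
    (hA : x + ρ < 1) (hB : -1 < x - ρ) :
    (∫ y in {y : ℝ | y ∈ Set.Ioo (-1:ℝ) 1 ∧ ρ < |y - x|},
        (Polynomial.Chebyshev.U ℝ n).eval y * Real.sqrt (1 - y ^ 2) / (y - x) ^ 2)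
      = (∫ θ in (0:ℝ)..arccos (x + ρ),
          Real.sin (((n:ℝ) + 1) * θ) * Real.sin θ / (Real.cos θ - x) ^ 2)
        + ∫ θ in arccos (x - ρ)..π,
          Real.sin (((n:ℝ) + 1) * θ) * Real.sin θ / (Real.cos θ - x) ^ 2 := by
  have hct1 : Real.cos (arccos (x + ρ)) = x + ρ := Real.cos_arccos (by linarith) hA.le
  have hct2 : Real.cos (arccos (x - ρ)) = x - ρ := Real.cos_arccos hB.le (by linarith)
  set f : ℝ → ℝ := fun y => (Polynomial.Chebyshev.U ℝ n).eval y * Real.sqrt (1 - y ^ 2)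
      / (y - x) ^ 2 with hf
  have hIL : IntegrableOn f (Set.Ioo (-1) (x - ρ)) := by
    apply IntegrableOn.mono_set _ Set.Ioo_subset_Icc_self
    apply ContinuousOn.integrableOn_Icc
    apply contOnF n
    intro y hy
    intro h; rw [sub_eq_zero] at h; subst h
    linarith [hy.2]
  have hIR : IntegrableOn f (Set.Ioo (x + ρ) 1) := by
    apply IntegrableOn.mono_set _ Set.Ioo_subset_Icc_self
    apply ContinuousOn.integrableOn_Icc
    apply contOnF n
    intro y hy
    intro h; rw [sub_eq_zero] at h; subst h
    linarith [hy.1]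
  have hdisj : Disjoint (Set.Ioo (-1:ℝ) (x - ρ)) (Set.Ioo (x + ρ) 1) := by
    rw [Set.disjoint_left]
    intro y hy1 hy2
    have := hy1.2; have := hy2.1; linarith
  rw [setEq hx1 hx2 hρ, MeasureTheory.setIntegral_union hdisj measurableSet_Ioo hIL hIR]
  have hle1 : (-1:ℝ) ≤ x - ρ := by linarith
  have hle2 : (x + ρ:ℝ) ≤ 1 := hA.le
  have eI1 : ∫ y in Set.Ioo (-1:ℝ) (x - ρ), f y = ∫ y in (-1:ℝ)..(x - ρ), f y := by
    rw [intervalIntegral.integral_of_le hle1, MeasureTheory.integral_Ioc_eq_integral_Ioo]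
  have eI2 : ∫ y in Set.Ioo (x + ρ) (1:ℝ), f y = ∫ y in (x + ρ)..(1:ℝ), f y := by
    rw [intervalIntegral.integral_of_le hle2, MeasureTheory.integral_Ioc_eq_integral_Ioo]
  -- substitutions
  have hcontR : ContinuousOn f (Real.cos '' uIcc (arccos (x + ρ)) (0:ℝ)) := by
    apply (contOnF n _).mono (s := {y : ℝ | x + ρ ≤ y})
    · intro y hy
      obtain ⟨t, ht, rfl⟩ := hy
      rw [uIcc_comm] at ht
      have := pos_left hx1 hρ hA ht
      show x + ρ ≤ Real.cos t
      linarith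
    · intro y hy
      have : x + ρ ≤ y := hy
      intro h; rw [sub_eq_zero] at h; subst h; linarith
  have hcontL : ContinuousOn f (Real.cos '' uIcc π (arccos (x - ρ))) := by
    apply (contOnF n _).mono (s := {y : ℝ | y ≤ x - ρ})
    · intro y hy
      obtain ⟨t, ht, rfl⟩ := hy
      rw [uIcc_comm] at ht
      have := neg_right hx2 hρ hB ht
      show Real.cos t ≤ x - ρ
      linarith
    · intro y hy
      have : y ≤ x - ρ := hy
      intro h; rw [sub_eq_zero] at h; subst h; linarith
  have hsubR := intervalIntegral.integral_comp_smul_deriv'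
    (g := f) (f := Real.cos) (f' := fun θ => -Real.sin θ)
    (a := arccos (x + ρ)) (b := (0:ℝ))
    (fun θ _ => Real.hasDerivAt_cos θ) (Real.continuous_sin.neg.continuousOn) hcontR
  have hsubL := intervalIntegral.integral_comp_smul_deriv'
    (g := f) (f := Real.cos) (f' := fun θ => -Real.sin θ)
    (a := π) (b := arccos (x - ρ))
    (fun θ _ => Real.hasDerivAt_cos θ) (Real.continuous_sin.neg.continuousOn) hcontL
  rw [hct1, Real.cos_zero] at hsubR
  rw [hct2, Real.cos_pi] at hsubL
  -- pointwise identity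
  have keym : ∀ θ : ℝ, 0 ≤ θ → θ ≤ π →
      -((-Real.sin θ) • f (Real.cos θ))
        = Real.sin (((n:ℝ) + 1) * θ) * Real.sin θ / (Real.cos θ - x) ^ 2 := by
    intro θ h0 hπ
    have h1 : Real.sqrt (1 - Real.cos θ ^ 2) = Real.sin θ :=
      (Real.sin_eq_sqrt_one_sub_cos_sq h0 hπ).symm
    have h2 := Polynomial.Chebyshev.U_real_cos θ (n : ℤ)
    push_cast at h2
    rw [smul_eq_mul, hf]
    show -(-Real.sin θ * ((Polynomial.Chebyshev.U ℝ n).eval (Real.cos θ)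
      * Real.sqrt (1 - Real.cos θ ^ 2) / (Real.cos θ - x) ^ 2)) = _
    rw [h1, ← h2]
    ring
  have hR : ∫ θ in arccos (x + ρ)..(0:ℝ), (-Real.sin θ) • f (Real.cos θ)
      = ∫ θ in (0:ℝ)..arccos (x + ρ),
          Real.sin (((n:ℝ) + 1) * θ) * Real.sin θ / (Real.cos θ - x) ^ 2 := by
    rw [intervalIntegral.integral_symm (0:ℝ) (arccos (x + ρ)), ← intervalIntegral.integral_neg]
    apply intervalIntegral.integral_congr
    intro θ hθ
    rw [uIcc_of_le (Real.arccos_nonneg _)] at hθ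
    exact keym θ hθ.1 (le_trans hθ.2 (Real.arccos_le_pi _))
  have hL : ∫ θ in π..arccos (x - ρ), (-Real.sin θ) • f (Real.cos θ)
      = ∫ θ in arccos (x - ρ)..π,
          Real.sin (((n:ℝ) + 1) * θ) * Real.sin θ / (Real.cos θ - x) ^ 2 := by
    rw [intervalIntegral.integral_symm (arccos (x - ρ)) π, ← intervalIntegral.integral_neg]
    apply intervalIntegral.integral_congr
    intro θ hθ
    rw [uIcc_of_le (Real.arccos_le_pi _)] at hθ
    exact keym θ (le_trans (Real.arccos_nonneg _) hθ.1) hθ.2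
  simp only [Function.comp] at hsubR hsubL
  rw [eI1, eI2, ← hsubR, ← hsubL, hR, hL]
  ring


lemma secondDiff {h : ℝ → ℝ} {d : ℝ} (hd : HasDerivAt h d 0) :
    Tendsto (fun ρ : ℝ => (h ρ + h (-ρ) - 2 * h 0) / ρ) (𝓝[>] 0) (𝓝 0) := by
  have hs := hasDerivAt_iff_tendsto_slope.mp hd
  have hsub : 𝓝[>] (0:ℝ) ≤ 𝓝[≠] (0:ℝ) :=
    nhdsWithin_mono 0 (fun y hy => ne_of_gt hy)
  have s1 : Tendsto (fun ρ : ℝ => (h ρ - h 0) / ρ) (𝓝[>] 0) (𝓝 d) := by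
    apply Tendsto.congr _ (hs.mono_left hsub)
    intro ρ
    rw [slope_def_field]
    field_simp
    rw [sub_zero]
  have hneg : Tendsto (fun ρ : ℝ => -ρ) (𝓝[>] (0:ℝ)) (𝓝[≠] (0:ℝ)) := by
    apply tendsto_nhdsWithin_of_tendsto_nhds_of_eventually_within
    · have : Tendsto (fun ρ : ℝ => -ρ) (𝓝 (0:ℝ)) (𝓝 (0:ℝ)) := by
        simpa using (continuous_neg.tendsto (0:ℝ))
      exact this.mono_left (nhdsWithin_le_nhds (s := Set.Ioi 0))
    · filter_upwards [self_mem_nhdsWithin] with ρ hρ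
      simp only [Set.mem_compl_iff, Set.mem_singleton_iff]
      exact neg_ne_zero.mpr (ne_of_gt hρ)
  have s2 : Tendsto (fun ρ : ℝ => (h (-ρ) - h 0) / ρ) (𝓝[>] 0) (𝓝 (-d)) := by
    apply Tendsto.congr _ ((hs.comp hneg).neg)
    intro ρ
    simp only [Function.comp_apply]
    rw [slope_def_field]
    rw [sub_zero, div_neg]
    ring
  have htot := s1.add s2
  rw [add_neg_cancel] at htot
  apply Tendsto.congr _ htot
  intro ρ
  rw [← add_div]
  ring_nf


end HadamardU

open HadamardU Real Topology in
theorem hadamard_transform_weighted_chebyshevU (n : ℕ) (x : ℝ)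
    (hx : x ∈ Set.Ioo (-1 : ℝ) 1) :
    Tendsto (fun ρ : ℝ =>
        (1 / Real.pi) *
          ((∫ y in {y : ℝ | y ∈ Set.Ioo (-1 : ℝ) 1 ∧ ρ < |y - x|},
              (Polynomial.Chebyshev.U ℝ n).eval y * Real.sqrt (1 - y ^ 2) / (y - x) ^ 2)
            - 2 * ((Polynomial.Chebyshev.U ℝ n).eval x * Real.sqrt (1 - x ^ 2)) / ρ))
      (nhdsWithin 0 (Set.Ioi 0))
      (nhds (-(n + 1) * (Polynomial.Chebyshev.U ℝ n).eval x)) := by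
  obtain ⟨hx1, hx2⟩ := hx
  have hπ : Real.pi ≠ 0 := Real.pi_ne_zero
  -- second difference limit
  have harc0 : HasDerivAt (fun t : ℝ => arccos (x + t)) (-(1 / Real.sqrt (1 - x ^ 2)) * 1) 0 := by
    have houter : HasDerivAt arccos (-(1 / Real.sqrt (1 - x ^ 2))) ((fun t : ℝ => x + t) 0) := by
      simpa using Real.hasDerivAt_arccos hx1.ne' hx2.ne
    exact houter.comp 0 (by simpa using (hasDerivAt_id (0:ℝ)).const_add x)
  have hsd1 : HasDerivAt (fun t : ℝ => Real.sin (((n:ℝ) + 1) * arccos (x + t)))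
      (Real.cos (((n:ℝ) + 1) * arccos (x + 0))
        * (((n:ℝ) + 1) * (-(1 / Real.sqrt (1 - x ^ 2)) * 1))) 0 :=
    (harc0.const_mul ((n:ℝ) + 1)).sin
  have hsd := secondDiff hsd1
  simp only [← sub_eq_add_neg, add_zero] at hsd
  -- Glauert limit
  have hgla := gla hx1 hx2 (n+1)
  have hcomb := (hsd.sub (hgla.const_mul ((n:ℝ) + 1))).const_mul (1/Real.pi)
  have hval : (1/Real.pi) * (0 - ((n:ℝ) + 1) * gVal x (n+1))
      = -((n:ℝ) + 1) * (Polynomial.Chebyshev.U ℝ n).eval x := by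
    show (1/Real.pi) * (0 - ((n:ℝ) + 1) * (π * ((Polynomial.Chebyshev.U ℝ n).eval x))) = _
    field_simp
    ring
  rw [hval] at hcomb
  apply Tendsto.congr' _ hcomb
  -- eventual equality
  have hδ : (0:ℝ) < min (1 - x) (1 + x) := lt_min (by linarith) (by linarith)
  filter_upwards [Ioo_mem_nhdsGT_of_mem (Set.left_mem_Ico.mpr hδ)] with ρ hρ
  have h1 : 0 < ρ := hρ.1
  have h2 : x + ρ < 1 := by have := hρ.2; have := min_le_left (1-x) (1+x); linarith
  have h3 : -1 < x - ρ := by have := hρ.2; have := min_le_right (1-x) (1+x); linarith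
  have hct1 : Real.cos (arccos (x + ρ)) = x + ρ := Real.cos_arccos (by linarith) h2.le
  have hct2 : Real.cos (arccos (x - ρ)) = x - ρ := Real.cos_arccos h3.le (by linarith)
  have hneL : ∀ θ ∈ uIcc (0:ℝ) (arccos (x + ρ)), Real.cos θ - x ≠ 0 := by
    intro θ hθ
    have := pos_left hx1 h1 h2 hθ; intro h; rw [h] at this; linarith
  have hneR : ∀ θ ∈ uIcc (arccos (x - ρ)) π, Real.cos θ - x ≠ 0 := by
    intro θ hθ
    have := neg_right hx2 h1 h3 hθ; intro h; rw [h] at this; linarith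
  have hfL := mainFTC (x := x) (a := (0:ℝ)) (b := arccos (x + ρ)) ((n:ℝ) + 1) hneL
  have hfR := mainFTC (x := x) (a := arccos (x - ρ)) (b := π) ((n:ℝ) + 1) hneR
  -- boundary simplifications
  rw [hct1, Real.cos_zero, mul_zero, Real.sin_zero, zero_div, sub_zero] at hfL
  rw [hct2, Real.cos_pi] at hfR
  have hKπ : Real.sin (((n:ℝ) + 1) * π) = 0 := by
    have : ((n:ℝ) + 1) = ((n + 1 : ℕ) : ℝ) := by push_cast; ring
    rw [this, Real.sin_nat_mul_pi]
  rw [hKπ, zero_div, zero_sub] at hfR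
  have hfx : (Polynomial.Chebyshev.U ℝ n).eval x * Real.sqrt (1 - x ^ 2)
      = Real.sin (((n:ℝ) + 1) * arccos x) := by
    have h2' := Polynomial.Chebyshev.U_real_cos (arccos x) (n : ℤ)
    rw [Real.cos_arccos hx1.le hx2.le, Real.sin_arccos] at h2'
    push_cast at h2'
    exact h2'
  have hcast : ((n + 1 : ℕ) : ℝ) = (n:ℝ) + 1 := by push_cast; ring
  have hgint : gInt x (n+1) ρ
      = (∫ θ in (0:ℝ)..arccos (x + ρ), Real.cos (((n:ℝ) + 1) * θ) / (Real.cos θ - x))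
        + ∫ θ in arccos (x - ρ)..π, Real.cos (((n:ℝ) + 1) * θ) / (Real.cos θ - x) := by
    simp only [gInt, hcast]
  show _ = (1 / Real.pi) *
      ((∫ y in {y : ℝ | y ∈ Set.Ioo (-1 : ℝ) 1 ∧ ρ < |y - x|},
          (Polynomial.Chebyshev.U ℝ n).eval y * Real.sqrt (1 - y ^ 2) / (y - x) ^ 2)
        - 2 * ((Polynomial.Chebyshev.U ℝ n).eval x * Real.sqrt (1 - x ^ 2)) / ρ)
  rw [setToTheta n hx1 hx2 h1 h2 h3, hfL, hfR, hfx, hgint]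
  have e1 : x + ρ - x = ρ := by ring
  have e2 : x - ρ - x = -ρ := by ring
  rw [e1, e2, div_neg]
  ring

end HadamardAux
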